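/- In a Cartesian tree T built over points with distinct x1-coordinates (root = point of minimum x2-coordinate, left/right subtrees built recursively over points with smaller/larger x1), for any two points a and b, the point c of minimum x2-coordinate among points with x1-coordinate in the interval [min(x1(a),x1(b)), max(x1(a),x1(b))] is the nearest common ancestor of a and b in T. -/

import Mathlib

/-- Points of the Cartesian tree, encoded as lexicographic pairs `(y, x)`:
the *first* coordinate is the x₂-coordinate (priority) and the *second*
coordinate is the x₁-coordinate (position).  (With distinct x₂-coordinates the
lexicographic minimum is exactly the point of minimum x₂-coordinate.) -/
abbrev CPoint := ℕ ×ₗ ℕ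

/-- The x₁-coordinate of a point. -/
def cx (p : CPoint) : ℕ := (ofLex p).2

/-- The x₂-coordinate of a point. -/
def cy (p : CPoint) : ℕ := (ofLex p).1

/-- Binary trees storing points. -/
inductive CTree where
  | leaf : CTree
  | node : CTree → CPoint → CTree → CTree

/-- The Cartesian tree of a finite set of points: the root is the point of
minimum x₂-coordinate, the left (resp. right) subtree is the Cartesian tree of
the points of smaller (resp. larger) x₁-coordinate. -/
def cartesianTree (S : Finset CPoint) : CTree :=
  if h : S.Nonempty then
    CTree.node (cartesianTree (S.filter fun q => cx q < cx (S.min' h))) (S.min' h)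
      (cartesianTree (S.filter fun q => cx (S.min' h) < cx q))
  else CTree.leaf
termination_by S.card
decreasing_by
  · exact Finset.card_lt_card (Finset.filter_ssubset.2 ⟨S.min' h, S.min'_mem h, by simp⟩)
  · exact Finset.card_lt_card (Finset.filter_ssubset.2 ⟨S.min' h, S.min'_mem h, by simp⟩)

/-- Membership of a point in a binary tree. -/
def CTree.mem : CTree → CPoint → Prop
  | .leaf, _ => False
  | .node l p r, q => q = p ∨ l.mem q ∨ r.mem q

/-- `t.anc a b`: the node holding point `a` is an ancestor (possibly equal)
of the node holding point `b` in the binary tree `t`. -/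
def CTree.anc : CTree → CPoint → CPoint → Prop
  | .leaf, _, _ => False
  | .node l p r, a, b => (a = p ∧ (b = p ∨ l.mem b ∨ r.mem b)) ∨ l.anc a b ∨ r.anc a b

lemma CTree.anc_mem_left : ∀ (t : CTree) (a b : CPoint), t.anc a b → t.mem a := by
  intro t
  induction t with
  | leaf => intro a b h; exact h.elim
  | node l p r ihl ihr =>
    intro a b h
    rcases h with ⟨h, _⟩ | h | h
    · exact Or.inl h
    · exact Or.inr (Or.inl (ihl a b h))
    · exact Or.inr (Or.inr (ihr a b h))

lemma CTree.anc_mem_right : ∀ (t : CTree) (a b : CPoint), t.anc a b → t.mem b := by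
  intro t
  induction t with
  | leaf => intro a b h; exact h.elim
  | node l p r ihl ihr =>
    intro a b h
    rcases h with ⟨_, h⟩ | h | h
    · exact h
    · exact Or.inr (Or.inl (ihl a b h))
    · exact Or.inr (Or.inr (ihr a b h))

lemma filter_lt_ssub (S : Finset CPoint) (h : S.Nonempty) :
    (S.filter fun q => cx q < cx (S.min' h)) ⊂ S :=
  Finset.filter_ssubset.2 ⟨S.min' h, S.min'_mem h, by simp⟩

lemma filter_gt_ssub (S : Finset CPoint) (h : S.Nonempty) :
    (S.filter fun q => cx (S.min' h) < cx q) ⊂ S :=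
  Finset.filter_ssubset.2 ⟨S.min' h, S.min'_mem h, by simp⟩

lemma mem_cartesianTree_sub : ∀ (S : Finset CPoint) (q : CPoint),
    (cartesianTree S).mem q → q ∈ S := by
  intro S
  induction S using Finset.strongInduction with
  | _ S ih =>
    intro q hq
    rw [cartesianTree] at hq
    by_cases h : S.Nonempty
    · rw [dif_pos h] at hq
      rcases hq with rfl | hq | hq
      · exact S.min'_mem h
      · exact Finset.filter_subset _ S (ih _ (filter_lt_ssub S h) q hq)
      · exact Finset.filter_subset _ S (ih _ (filter_gt_ssub S h) q hq)
    · rw [dif_neg h] at hq; exact hq.elim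

lemma mem_cartesianTree : ∀ (S : Finset CPoint), Set.InjOn cx (S : Set CPoint) →
    ∀ q ∈ S, (cartesianTree S).mem q := by
  intro S
  induction S using Finset.strongInduction with
  | _ S ih =>
    intro hx1 q hq
    have h : S.Nonempty := ⟨q, hq⟩
    rw [cartesianTree, dif_pos h]
    rcases lt_trichotomy (cx q) (cx (S.min' h)) with hlt | heq | hgt
    · exact Or.inr (Or.inl (ih _ (filter_lt_ssub S h)
        (hx1.mono (Finset.coe_subset.2 (Finset.filter_subset _ S))) q
        (Finset.mem_filter.2 ⟨hq, hlt⟩)))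
    · exact Or.inl (hx1 hq (S.min'_mem h) heq)
    · exact Or.inr (Or.inr (ih _ (filter_gt_ssub S h)
        (hx1.mono (Finset.coe_subset.2 (Finset.filter_subset _ S))) q
        (Finset.mem_filter.2 ⟨hq, hgt⟩)))

lemma cy_min'_le (S : Finset CPoint) (h : S.Nonempty) (p : CPoint) (hp : p ∈ S) :
    cy (S.min' h) ≤ cy p := by
  have h2 := Prod.Lex.le_iff.mp (S.min'_le p hp)
  rcases h2 with h2 | h2
  · exact le_of_lt h2
  · exact le_of_eq h2.1
lemma key : ∀ (n : ℕ) (S : Finset CPoint),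
    S.card ≤ n →
    Set.InjOn cy (S : Set CPoint) → Set.InjOn cx (S : Set CPoint) →
    ∀ a b c : CPoint, a ∈ S → b ∈ S → c ∈ S →
    min (cx a) (cx b) ≤ cx c → cx c ≤ max (cx a) (cx b) →
    (∀ p ∈ S, min (cx a) (cx b) ≤ cx p → cx p ≤ max (cx a) (cx b) → cy c ≤ cy p) →
    (cartesianTree S).anc c a ∧ (cartesianTree S).anc c b ∧
      ∀ d, (cartesianTree S).anc d a → (cartesianTree S).anc d b →
        (cartesianTree S).anc d c := by
  intro n
  induction n with
  | zero =>
    intro S hcard _ _ a b c ha _ _ _ _ _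
    have := Finset.card_pos.2 ⟨a, ha⟩
    omega
  | succ n ih =>
    intro S hcard hx2 hx1 a b c ha hb hc hlo hhi hmin
    have hS : S.Nonempty := ⟨a, ha⟩
    set m := S.min' hS with hmdef
    have hmS : m ∈ S := S.min'_mem hS
    have htree : cartesianTree S =
        CTree.node (cartesianTree (S.filter fun q => cx q < cx m)) m
          (cartesianTree (S.filter fun q => cx m < cx q)) := by
      rw [cartesianTree, dif_pos hS]
    set Sl := S.filter fun q => cx q < cx m with hSl
    set Sr := S.filter fun q => cx m < cx q with hSr
    have hSlsub : (Sl : Set CPoint) ⊆ S := Finset.coe_subset.2 (Finset.filter_subset _ S)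
    have hSrsub : (Sr : Set CPoint) ⊆ S := Finset.coe_subset.2 (Finset.filter_subset _ S)
    have hSlcard : Sl.card ≤ n := by
      have h1 : Sl ⊂ S := Finset.filter_ssubset.2 ⟨m, hmS, by simp⟩
      have := Finset.card_lt_card h1; omega
    have hSrcard : Sr.card ≤ n := by
      have h1 : Sr ⊂ S := Finset.filter_ssubset.2 ⟨m, hmS, by simp⟩
      have := Finset.card_lt_card h1; omega
    have hmemSl : ∀ q : CPoint, (cartesianTree Sl).mem q → q ∈ S ∧ cx q < cx m := by
      intro q hq
      exact Finset.mem_filter.1 (mem_cartesianTree_sub Sl q hq)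
    have hmemSr : ∀ q : CPoint, (cartesianTree Sr).mem q → q ∈ S ∧ cx m < cx q := by
      intro q hq
      exact Finset.mem_filter.1 (mem_cartesianTree_sub Sr q hq)
    rw [htree]
    by_cases hmlo : min (cx a) (cx b) ≤ cx m
    · by_cases hmhi : cx m ≤ max (cx a) (cx b)
      · -- m lies in the interval, so c = m
        have hcm : c = m := hx2 hc hmS (le_antisymm (hmin m hmS hmlo hmhi) (cy_min'_le S hS c hc))
        subst hcm
        have hmem : ∀ q ∈ S, q = m ∨ (cartesianTree Sl).mem q ∨ (cartesianTree Sr).mem q := by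
          intro q hq
          have := mem_cartesianTree S hx1 q hq
          rw [htree] at this
          exact this
        refine ⟨Or.inl ⟨rfl, hmem a ha⟩, Or.inl ⟨rfl, hmem b hb⟩, ?_⟩
        intro d hda hdb
        rcases hda with ⟨hdm, _⟩ | hda | hda
        · exact Or.inl ⟨hdm, Or.inl rfl⟩
        · -- d is in the left subtree, so a is too
          have haL := hmemSl a ((cartesianTree Sl).anc_mem_right d a hda)
          rcases hdb with ⟨hdm, _⟩ | hdb | hdb
          · exact Or.inl ⟨hdm, Or.inl rfl⟩
          · have hbL := hmemSl b ((cartesianTree Sl).anc_mem_right d b hdb)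
            omega
          · have hdL := hmemSl d ((cartesianTree Sl).anc_mem_left d a hda)
            have hdR := hmemSr d ((cartesianTree Sr).anc_mem_left d b hdb)
            omega
        · have haR := hmemSr a ((cartesianTree Sr).anc_mem_right d a hda)
          rcases hdb with ⟨hdm, _⟩ | hdb | hdb
          · exact Or.inl ⟨hdm, Or.inl rfl⟩
          · have hdL := hmemSl d ((cartesianTree Sl).anc_mem_left d b hdb)
            have hdR := hmemSr d ((cartesianTree Sr).anc_mem_left d a hda)
            omega
          · have hbR := hmemSr b ((cartesianTree Sr).anc_mem_right d b hdb)
            omega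
      · -- max < cx m : everything in the left subtree
        push_neg at hmhi
        have haL : a ∈ Sl := Finset.mem_filter.2 ⟨ha, by omega⟩
        have hbL : b ∈ Sl := Finset.mem_filter.2 ⟨hb, by omega⟩
        have hcL : c ∈ Sl := Finset.mem_filter.2 ⟨hc, by omega⟩
        obtain ⟨H1, H2, H3⟩ := ih Sl hSlcard (hx2.mono hSlsub) (hx1.mono hSlsub) a b c
          haL hbL hcL hlo hhi
          (fun p hp h1 h2 => hmin p (Finset.filter_subset _ S hp) h1 h2)
        have hcmem : (cartesianTree Sl).mem c := mem_cartesianTree Sl (hx1.mono hSlsub) c hcL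
        refine ⟨Or.inr (Or.inl H1), Or.inr (Or.inl H2), ?_⟩
        intro d hda hdb
        rcases hda with ⟨hdm, _⟩ | hda | hda
        · exact Or.inl ⟨hdm, Or.inr (Or.inl hcmem)⟩
        · rcases hdb with ⟨hdm, _⟩ | hdb | hdb
          · exact Or.inl ⟨hdm, Or.inr (Or.inl hcmem)⟩
          · exact Or.inr (Or.inl (H3 d hda hdb))
          · have h1 := hmemSr b ((cartesianTree Sr).anc_mem_right d b hdb)
            omega
        · have h1 := hmemSr a ((cartesianTree Sr).anc_mem_right d a hda)
          omega
    · -- cx m < min : everything in the right subtree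
      push_neg at hmlo
      have haR : a ∈ Sr := Finset.mem_filter.2 ⟨ha, by omega⟩
      have hbR : b ∈ Sr := Finset.mem_filter.2 ⟨hb, by omega⟩
      have hcR : c ∈ Sr := Finset.mem_filter.2 ⟨hc, by omega⟩
      obtain ⟨H1, H2, H3⟩ := ih Sr hSrcard (hx2.mono hSrsub) (hx1.mono hSrsub) a b c
        haR hbR hcR hlo hhi
        (fun p hp h1 h2 => hmin p (Finset.filter_subset _ S hp) h1 h2)
      have hcmem : (cartesianTree Sr).mem c := mem_cartesianTree Sr (hx1.mono hSrsub) c hcR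
      refine ⟨Or.inr (Or.inr H1), Or.inr (Or.inr H2), ?_⟩
      intro d hda hdb
      rcases hda with ⟨hdm, _⟩ | hda | hda
      · exact Or.inl ⟨hdm, Or.inr (Or.inr hcmem)⟩
      · have h1 := hmemSl a ((cartesianTree Sl).anc_mem_right d a hda)
        omega
      · rcases hdb with ⟨hdm, _⟩ | hdb | hdb
        · exact Or.inl ⟨hdm, Or.inr (Or.inr hcmem)⟩
        · have h1 := hmemSl b ((cartesianTree Sl).anc_mem_right d b hdb)
          omega
        · exact Or.inr (Or.inr (H3 d hda hdb))
/-- In a Cartesian tree over points with distinct x₁- and distinct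
x₂-coordinates, for any two points `a` and `b`, the point `c` of minimum
x₂-coordinate among the points whose x₁-coordinate lies in the interval
`[min(x₁ a, x₁ b), max(x₁ a, x₁ b)]` is the nearest common ancestor of `a`
and `b`: it is a common ancestor, and every common ancestor of `a` and `b` is
an ancestor of `c`. -/
theorem stmt_17 (S : Finset CPoint)
    (hx2 : Set.InjOn cy (S : Set CPoint))
    (hx1 : Set.InjOn cx (S : Set CPoint))
    (a b c : CPoint) (ha : a ∈ S) (hb : b ∈ S) (hc : c ∈ S)
    (hlo : min (cx a) (cx b) ≤ cx c) (hhi : cx c ≤ max (cx a) (cx b))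
    (hmin : ∀ p ∈ S, min (cx a) (cx b) ≤ cx p → cx p ≤ max (cx a) (cx b) → cy c ≤ cy p) :
    (cartesianTree S).anc c a ∧ (cartesianTree S).anc c b ∧
      ∀ d, (cartesianTree S).anc d a → (cartesianTree S).anc d b →
        (cartesianTree S).anc d c := by
  exact key S.card S le_rfl hx2 hx1 a b c ha hb hc hlo hhi hmin
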